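/- arXiv:math/0104077 — 2 statements merged into one kernel-verified Lean document; each statement's English description precedes it below -/
import Mathlib

section
/- Let n ≥ 1 and let j : ℤ^n → ℝ be a nonzero additive group homomorphism. Then there exists a ℤ-basis b_1, …, b_n of ℤ^n (equivalently, a matrix A ∈ GL(n, ℤ) whose columns are the b_i) such that j(b_i) > 0 for every i = 1, …, n. -/
/-- Any nonzero additive homomorphism `j : ℤⁿ → ℝ` admits a `ℤ`-basis of `ℤⁿ`
on which `j` takes only positive values. -/
theorem stmt_1 (n : ℕ) (hn : 1 ≤ n) (j : (Fin n → ℤ) →+ ℝ) (hj : j ≠ 0) :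
    ∃ b : Module.Basis (Fin n) ℤ (Fin n → ℤ), ∀ i : Fin n, 0 < j (b i) := by
  -- find a coordinate where j is nonzero
  have hexists : ∃ k : Fin n, j (Pi.single k 1) ≠ 0 := by
    by_contra h
    push_neg at h
    apply hj
    refine DFunLike.ext _ _ fun x => ?_
    have hx : x = ∑ i, Pi.single i (x i) := (Finset.univ_sum_single x).symm
    rw [hx, map_sum]
    have : ∀ i : Fin n, j (Pi.single i (x i)) = 0 := by
      intro i
      have : Pi.single i (x i) = (x i) • (Pi.single i (1 : ℤ) : Fin n → ℤ) := by
        funext l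
        simp [Pi.single_apply, mul_ite]
      rw [this, map_zsmul, h i, smul_zero]
    simp [this]
  obtain ⟨k, hk⟩ := hexists
  set s : ℤ := if 0 < j (Pi.single k 1) then 1 else -1 with hs_def
  have hs : s * s = 1 := by rw [hs_def]; split <;> norm_num
  have hc : 0 < (s : ℝ) * j (Pi.single k 1) := by
    rw [hs_def]; split
    · push_cast; linarith
    · push_cast
      rename_i h'
      push_neg at h'
      have : j (Pi.single k 1) < 0 := lt_of_le_of_ne h' hk
      nlinarith
  set c : ℝ := (s : ℝ) * j (Pi.single k 1) with hc_def
  -- pick large coefficients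
  have hNex : ∀ i : Fin n, ∃ N : ℕ, -(j (Pi.single i 1)) / c < N := fun i => exists_nat_gt _
  choose N hN using hNex
  set m : Fin n → ℤ := fun i => if i = k then 1 else (N i : ℤ) with hm_def
  have hmk : m k = 1 := by simp [hm_def]
  -- key summation lemma
  have sumlem : ∀ (x : Fin n → ℤ) (A : ℤ),
      (∑ l, m l * (if l = k then A else x l))
        = m k * A + (∑ l, m l * x l) - m k * x k := by
    intro x A
    rw [← Finset.add_sum_erase _ (fun l => m l * (if l = k then A else x l)) (Finset.mem_univ k),
        ← Finset.add_sum_erase _ (fun l => m l * x l) (Finset.mem_univ k)]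
    have he : (∑ l ∈ Finset.univ.erase k, m l * (if l = k then A else x l))
        = ∑ l ∈ Finset.univ.erase k, m l * x l := by
      refine Finset.sum_congr rfl fun l hl => ?_
      rw [if_neg (Finset.ne_of_mem_erase hl)]
    rw [he]
    simp only [if_pos rfl, if_true]
    ring
  -- the unimodular change of basis
  let F : (Fin n → ℤ) ≃ₗ[ℤ] (Fin n → ℤ) :=
    { toFun := fun x i => if i = k then s * ∑ l, m l * x l else x i
      invFun := fun y i => if i = k then s * y k - (∑ l, m l * y l) + y k else y i
      map_add' := by
        intro x y
        funext i
        by_cases h : i = k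
        · simp only [h, if_pos rfl, if_true, Pi.add_apply]
          rw [show (∑ l, m l * (x l + y l)) = (∑ l, m l * x l) + ∑ l, m l * y l by
            rw [← Finset.sum_add_distrib]; exact Finset.sum_congr rfl fun l _ => by ring]
          ring
        · simp [h]
      map_smul' := by
        intro z x
        funext i
        by_cases h : i = k
        · simp only [h, if_pos rfl, if_true, Pi.smul_apply, smul_eq_mul, RingHom.id_apply]
          rw [show (∑ l, m l * (z * x l)) = z * ∑ l, m l * x l by
            rw [Finset.mul_sum]; exact Finset.sum_congr rfl fun l _ => by ring]
          ring
        · simp [h]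
      left_inv := by
        intro x
        funext i
        by_cases h : i = k
        · subst h
          simp only [if_pos rfl, if_true]
          rw [sumlem x (s * ∑ l, m l * x l), hmk]
          linear_combination (∑ l, m l * x l) * hs
        · simp [h]
      right_inv := by
        intro y
        funext i
        by_cases h : i = k
        · subst h
          simp only [if_pos rfl, if_true]
          rw [sumlem y (s * y i - (∑ l, m l * y l) + y i), hmk]
          linear_combination (y i) * hs
        · simp [h] }
  refine ⟨(Pi.basisFun ℤ (Fin n)).map F, fun i => ?_⟩
  have hb : ((Pi.basisFun ℤ (Fin n)).map F) i = F (Pi.single i 1) := by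
    simp [Module.Basis.map_apply]
  have hsum : (∑ l, m l * (Pi.single i (1 : ℤ) : Fin n → ℤ) l) = m i := by
    rw [Finset.sum_eq_single i]
    · simp
    · intro l _ hl
      rw [Pi.single_eq_of_ne hl, mul_zero]
    · intro h; exact absurd (Finset.mem_univ i) h
  have hFi : F (Pi.single i 1)
      = (if i = k then 0 else Pi.single i 1) + Pi.single k (s * m i) := by
    have hFdef : F (Pi.single i 1)
        = fun l => if l = k then s * ∑ l', m l' * (Pi.single i (1:ℤ) : Fin n → ℤ) l' else
            (Pi.single i (1:ℤ) : Fin n → ℤ) l := rfl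
    rw [hFdef]
    funext l
    simp only [hsum]
    simp only [Pi.add_apply, Pi.single_apply, Pi.zero_apply]
    split_ifs <;> simp_all [Pi.single_apply]
  have hjsingle : j (Pi.single k (s * m i)) = ((s * m i : ℤ) : ℝ) * j (Pi.single k 1) := by
    rw [show (Pi.single k (s * m i) : Fin n → ℤ) = (s * m i) • (Pi.single k (1:ℤ) : Fin n → ℤ) by
      funext l
      simp [Pi.single_apply, mul_ite], map_zsmul, zsmul_eq_mul]
  rw [hb, hFi, map_add, hjsingle]
  have hcast : ((s * m i : ℤ) : ℝ) * j (Pi.single k 1) = (m i : ℝ) * c := by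
    rw [hc_def]; push_cast; ring
  rw [hcast]
  by_cases hi : i = k
  · subst hi
    rw [if_pos rfl, map_zero, hmk]
    push_cast
    linarith
  · rw [if_neg hi]
    have hmi : m i = (N i : ℤ) := by simp [hm_def, hi]
    have h1 : -(j (Pi.single i 1)) < (N i : ℝ) * c := by
      have := hN i
      rw [div_lt_iff₀ hc] at this
      linarith
    rw [hmi]
    push_cast
    linarith
end

section
/- Let n ≥ 1 and let j : ℤ^n → ℝ be a nonzero additive group homomorphism. Then there exist a ℤ-basis b_1, …, b_n of ℤ^n and a real number c > 0 such that c · j(b_1) = 1 and c · j(b_i) > 0 for every i = 2, …, n. In other words, up to a positive rescaling of ℝ and a change of ℤ-basis, j is given by j(e_1) = 1, j(e_2) = θ_1, …, j(e_n) = θ_{n-1} with all θ_i positive reals. -/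
/-- Any nonzero additive homomorphism `j : ℤⁿ → ℝ` admits, after a positive
rescaling `c` of `ℝ` and a change of `ℤ`-basis of `ℤⁿ`, the normal form
`j(b₁) = 1`, `j(bᵢ) = θᵢ > 0` for `i = 2, …, n`. -/
theorem stmt_2 (n : ℕ) (hn : 1 ≤ n) (j : (Fin n → ℤ) →+ ℝ) (hj : j ≠ 0) :
    ∃ (b : Module.Basis (Fin n) ℤ (Fin n → ℤ)) (c : ℝ), 0 < c ∧
      c * j (b ⟨0, hn⟩) = 1 ∧
      ∀ i : Fin n, i ≠ ⟨0, hn⟩ → 0 < c * j (b i) := by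
  classical
  set e : Fin n → (Fin n → ℤ) := fun i => Pi.single i 1 with he
  -- find a coordinate where j is nonzero
  have hx : ∃ k, j (e k) ≠ 0 := by
    by_contra h
    push_neg at h
    apply hj
    ext x
    simpa using h x
  obtain ⟨k, hk⟩ := hx
  set ε : ℤ := if 0 < j (e k) then 1 else -1 with hε
  have hε2 : ε * ε = 1 := by
    by_cases h : 0 < j (e k) <;> simp [hε, h]
  set t : ℝ := (ε : ℝ) * j (e k) with htdef
  have ht : 0 < t := by
    rcases hk.lt_or_gt with h | h
    · have : ¬ 0 < j (e k) := not_lt.2 h.le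
      simp only [htdef, hε, if_neg this]
      push_cast
      nlinarith
    · simp only [htdef, hε, if_pos h]
      push_cast
      nlinarith
  set m : Fin n → ℤ := fun i => ⌈(1 - j (e i)) / t⌉ with hm
  set v : Fin n → (Fin n → ℤ) :=
    fun i => if i = k then ε • e k else e i + m i • (ε • e k) with hv
  set w : Fin n → (Fin n → ℤ) :=
    fun i => if i = k then ε • e k else e i - m i • e k with hw
  set B0 : Module.Basis (Fin n) ℤ (Fin n → ℤ) := Pi.basisFun ℤ (Fin n) with hB0
  have hB0e : ∀ i, B0 i = e i := by
    intro i; simp [hB0, he]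
  set f : (Fin n → ℤ) →ₗ[ℤ] (Fin n → ℤ) := B0.constr ℤ v with hf
  set g : (Fin n → ℤ) →ₗ[ℤ] (Fin n → ℤ) := B0.constr ℤ w with hg
  have hfe : ∀ i, f (e i) = v i := by
    intro i; rw [← hB0e i]; simp [hf]
  have hge : ∀ i, g (e i) = w i := by
    intro i; rw [← hB0e i]; simp [hg]
  have hfg : f.comp g = LinearMap.id := by
    apply B0.ext
    intro i
    rw [hB0e i]
    simp only [LinearMap.comp_apply, LinearMap.id_apply, hge]
    by_cases h : i = k
    · subst h
      simp only [hw, if_pos rfl, map_smul, hfe, hv, if_pos rfl]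
      rw [smul_smul, hε2, one_smul]
    · simp only [hw, if_neg h, map_sub, map_smul, hfe, hv, if_neg h, if_pos rfl]
      abel
  have hgf : g.comp f = LinearMap.id := by
    apply B0.ext
    intro i
    rw [hB0e i]
    simp only [LinearMap.comp_apply, LinearMap.id_apply, hfe]
    by_cases h : i = k
    · subst h
      simp only [hv, if_pos rfl, map_smul, hge, hw, if_pos rfl]
      rw [smul_smul, hε2, one_smul]
    · simp only [hv, if_neg h, map_add, map_smul, hge, hw, if_neg h, if_pos rfl]
      have hee : ε • ε • e k = e k := by rw [smul_smul, hε2, one_smul]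
      rw [hee]
      abel
  set L : (Fin n → ℤ) ≃ₗ[ℤ] (Fin n → ℤ) := LinearEquiv.ofLinear f g hfg hgf with hL
  set B : Module.Basis (Fin n) ℤ (Fin n → ℤ) := B0.map L with hB
  have hBv : ∀ i, B i = v i := by
    intro i
    rw [hB]
    simp only [Module.Basis.map_apply, hB0e]
    exact hfe i
  -- positivity
  have hjs : ∀ x : Fin n → ℤ, ∀ c : ℤ, j (c • x) = (c : ℝ) * j x := by
    intro x c
    rw [map_zsmul]
    simp [zsmul_eq_mul]
  have jpos : ∀ i, 0 < j (v i) := by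
    intro i
    by_cases h : i = k
    · subst h
      simp only [hv, if_pos rfl]
      rw [hjs]
      exact ht
    · simp only [hv, if_neg h]
      rw [map_add, hjs, hjs, ← htdef]
      have hmi : (1 - j (e i)) / t ≤ (m i : ℝ) := Int.le_ceil _
      have := (div_le_iff₀ ht).1 hmi
      nlinarith
  set i0 : Fin n := ⟨0, hn⟩ with hi0
  refine ⟨B, (j (v i0))⁻¹, inv_pos.2 (jpos i0), ?_, ?_⟩
  · rw [hBv]
    exact inv_mul_cancel₀ (jpos i0).ne'
  · intro i _
    rw [hBv]
    exact mul_pos (inv_pos.2 (jpos i0)) (jpos i)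
end
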